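/- arXiv:1603.08430 — 3 statements merged into one kernel-verified Lean document; each statement's English description precedes it below -/
import Mathlib

section
/- Let G = (V1, V2, E) be a bipartite graph with |V1| = |V2| = n and E ≠ ∅, and let Ḡ be its co-bipartite complement; assume Ḡ is connected. Then the unsmoothened vertex attack tolerance of Ḡ satisfies τ̂(Ḡ) = min over (A,B) ∈ BK(G) of (2n − |A| − |B|)/|A|, which in turn equals (min over (A,B) ∈ BK(G) of (2n − |B|)/|A|) − 1. -/
set_option linter.unusedSectionVars false


open SimpleGraph

/-- The number of vertices of a largest connected component of the subgraph of `G`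
induced on the vertex set `T`. -/
noncomputable def maxCompCard {V : Type*} [Fintype V] (G : SimpleGraph V) (T : Set V) : ℕ :=
  sSup (Set.range fun C : (G.induce T).ConnectedComponent => Nat.card C.supp)

/-- The unsmoothened vertex attack tolerance `τ̂(G)`: the infimum over nonempty attack
sets `S` whose removal leaves at least one vertex outside the largest remaining component,
of `|S| / (|V ∖ S| - |C_max(V - S)|)`. -/
noncomputable def uvat {V : Type*} [Fintype V] [DecidableEq V] (G : SimpleGraph V) : ℝ :=
  sInf {x : ℝ | ∃ S : Finset V, S.Nonempty ∧
    maxCompCard G ((S : Set V))ᶜ < Sᶜ.card ∧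
    x = (S.card : ℝ) / ((Sᶜ.card : ℝ) - (maxCompCard G ((S : Set V))ᶜ : ℝ))}

/-- The co-bipartite complement of a bipartite graph with parts `α`, `β` and edge
relation `E : α → β → Prop`: both parts become cliques, and a cross pair is an edge
iff it is not an edge of the bipartite graph. -/
def cobip {α β : Type*} (E : α → β → Prop) : SimpleGraph (α ⊕ β) where
  Adj x y :=
    match x, y with
    | Sum.inl a, Sum.inl a' => a ≠ a'
    | Sum.inr b, Sum.inr b' => b ≠ b'
    | Sum.inl a, Sum.inr b => ¬ E a b
    | Sum.inr b, Sum.inl a => ¬ E a b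
  symm := by
    constructor
    rintro (a | b) (a' | b') h
    · exact Ne.symm h
    · exact h
    · exact h
    · exact Ne.symm h
  loopless := by
    constructor
    rintro (a | b) h
    · exact h rfl
    · exact h rfl

lemma isLeft_eq_of_reachable {V : Type*} {G : SimpleGraph V} (f : V → Bool)
    (hf : ∀ u v, G.Adj u v → f u = f v) {u v : V} (h : G.Reachable u v) : f u = f v := by
  obtain ⟨p⟩ := h
  induction p with
  | nil => rfl
  | cons h p ih => exact (hf _ _ h).trans ih

section main
variable {α β : Type*} [Fintype α] [Fintype β] {E : α → β → Prop}

def sideSet (A : Finset α) (B : Finset β) : Set (α ⊕ β) := {x | Sum.elim (· ∈ A) (· ∈ B) x}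

lemma mem_sideSet_inl {A : Finset α} {B : Finset β} {a : α} :
    Sum.inl a ∈ sideSet A B ↔ a ∈ A := Iff.rfl

lemma side_of_reachable {A : Finset α} {B : Finset β}
    (hAB : ∀ a ∈ A, ∀ b ∈ B, E a b) {x y : sideSet A B}
    (h : ((cobip E).induce (sideSet A B)).Reachable x y) :
    (x : α ⊕ β).isLeft = (y : α ⊕ β).isLeft := by
  refine isLeft_eq_of_reachable (fun z : sideSet A B => (z : α ⊕ β).isLeft) ?_ h
  rintro ⟨(a|b), hu⟩ ⟨(a'|b'), hv⟩ hadj <;>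
    simp only [SimpleGraph.induce, SimpleGraph.comap_adj, cobip] at hadj <;> simp_all [sideSet]
  · exact hadj (hAB a hu b' hv)
  · exact hadj (hAB a' hv b hu)

lemma reachable_of_side {A : Finset α} {B : Finset β} {x y : sideSet A B}
    (h : (x : α ⊕ β).isLeft = (y : α ⊕ β).isLeft) :
    ((cobip E).induce (sideSet A B)).Reachable x y := by
  by_cases hxy : x = y
  · exact hxy ▸ Reachable.refl x
  · refine Adj.reachable ?_
    obtain ⟨(a|b), hu⟩ := x <;> obtain ⟨(a'|b'), hv⟩ := y
    · show (cobip E).Adj (Sum.inl a) (Sum.inl a')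
      have : a ≠ a' := fun hc => hxy (by simp [hc])
      exact this
    · simp at h
    · simp at h
    · show (cobip E).Adj (Sum.inr b) (Sum.inr b')
      have : b ≠ b' := fun hc => hxy (by simp [hc])
      exact this

lemma supp_card_left {A : Finset α} {B : Finset β}
    (hAB : ∀ a ∈ A, ∀ b ∈ B, E a b) (a0 : α) (h0 : a0 ∈ A) :
    Nat.card ((((cobip E).induce (sideSet A B)).connectedComponentMk
      ⟨Sum.inl a0, h0⟩).supp) = A.card := by
  set G' := (cobip E).induce (sideSet A B)
  have hsupp : (G'.connectedComponentMk ⟨Sum.inl a0, h0⟩).supp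
      = {y : sideSet A B | (y : α ⊕ β).isLeft = true} := by
    ext y
    show G'.connectedComponentMk y = G'.connectedComponentMk ⟨Sum.inl a0, h0⟩ ↔ _
    rw [ConnectedComponent.eq]
    constructor
    · intro h; exact (side_of_reachable hAB h).trans rfl
    · intro h; exact reachable_of_side (by simpa using h)
  rw [hsupp]
  have himg : Subtype.val '' {y : sideSet A B | (y : α ⊕ β).isLeft = true}
      = Sum.inl '' (A : Set α) := by
    ext v
    constructor
    · rintro ⟨⟨w, hw⟩, hy, rfl⟩
      obtain (a|b) := w
      · exact ⟨a, hw, rfl⟩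
      · simp at hy
    · rintro ⟨a, ha, rfl⟩
      exact ⟨⟨Sum.inl a, ha⟩, rfl, rfl⟩
  calc Nat.card {y : sideSet A B | (y : α ⊕ β).isLeft = true}
      = Nat.card (Subtype.val '' {y : sideSet A B | (y : α ⊕ β).isLeft = true}) :=
        (Nat.card_image_of_injective Subtype.val_injective _).symm
    _ = Nat.card (Sum.inl '' (A : Set α)) := by rw [himg]
    _ = Nat.card (A : Set α) := Nat.card_image_of_injective Sum.inl_injective _
    _ = A.card := by rw [Nat.card_coe_set_eq, Set.ncard_coe_finset]

lemma supp_card_right {A : Finset α} {B : Finset β}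
    (hAB : ∀ a ∈ A, ∀ b ∈ B, E a b) (b0 : β) (h0 : b0 ∈ B) :
    Nat.card ((((cobip E).induce (sideSet A B)).connectedComponentMk
      ⟨Sum.inr b0, h0⟩).supp) = B.card := by
  set G' := (cobip E).induce (sideSet A B)
  have hsupp : (G'.connectedComponentMk ⟨Sum.inr b0, h0⟩).supp
      = {y : sideSet A B | (y : α ⊕ β).isLeft = false} := by
    ext y
    show G'.connectedComponentMk y = G'.connectedComponentMk ⟨Sum.inr b0, h0⟩ ↔ _
    rw [ConnectedComponent.eq]
    constructor
    · intro h; exact (side_of_reachable hAB h).trans rfl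
    · intro h; exact reachable_of_side (by simpa using h)
  rw [hsupp]
  have himg : Subtype.val '' {y : sideSet A B | (y : α ⊕ β).isLeft = false}
      = Sum.inr '' (B : Set β) := by
    ext v
    constructor
    · rintro ⟨⟨w, hw⟩, hy, rfl⟩
      obtain (a|b) := w
      · simp at hy
      · exact ⟨b, hw, rfl⟩
    · rintro ⟨b, hb, rfl⟩
      exact ⟨⟨Sum.inr b, hb⟩, rfl, rfl⟩
  calc Nat.card {y : sideSet A B | (y : α ⊕ β).isLeft = false}
      = Nat.card (Subtype.val '' {y : sideSet A B | (y : α ⊕ β).isLeft = false}) :=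
        (Nat.card_image_of_injective Subtype.val_injective _).symm
    _ = Nat.card (Sum.inr '' (B : Set β)) := by rw [himg]
    _ = Nat.card (B : Set β) := Nat.card_image_of_injective Sum.inr_injective _
    _ = B.card := by rw [Nat.card_coe_set_eq, Set.ncard_coe_finset]

lemma maxCompCard_sideSet {A : Finset α} {B : Finset β}
    (hA : A.Nonempty) (hB : B.Nonempty) (hAB : ∀ a ∈ A, ∀ b ∈ B, E a b) :
    maxCompCard (cobip E) (sideSet A B) = max A.card B.card := by
  obtain ⟨a0, ha0⟩ := hA
  obtain ⟨b0, hb0⟩ := hB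
  have hrange : (Set.range fun C : ((cobip E).induce (sideSet A B)).ConnectedComponent =>
      Nat.card C.supp) = {A.card, B.card} := by
    ext m
    constructor
    · rintro ⟨C, rfl⟩
      obtain ⟨⟨(a|b), hv⟩, rfl⟩ := C.exists_rep
      · exact Or.inl (supp_card_left hAB a hv)
      · exact Or.inr (supp_card_right hAB b hv)
    · rintro (rfl | rfl)
      · exact ⟨_, supp_card_left hAB a0 ha0⟩
      · exact ⟨_, supp_card_right hAB b0 hb0⟩
  rw [maxCompCard, hrange, csSup_pair]

lemma maxCompCard_of_preconnected {V : Type*} [Fintype V] (G : SimpleGraph V) (T : Set V)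
    (h : (G.induce T).Preconnected) : maxCompCard G T = Nat.card T := by
  rcases isEmpty_or_nonempty T with hT | hT
  · have : (Set.range fun C : (G.induce T).ConnectedComponent => Nat.card C.supp) = ∅ := by
      rw [Set.range_eq_empty_iff]
      constructor
      intro C
      obtain ⟨v, -⟩ := C.exists_rep
      exact hT.false v
    rw [maxCompCard, this, csSup_empty]
    simp
  · have hCC : ∀ C : (G.induce T).ConnectedComponent, Nat.card C.supp = Nat.card T := by
      intro C
      refine ConnectedComponent.ind (fun v => ?_) C
      have : ((G.induce T).connectedComponentMk v).supp = Set.univ := by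
        ext w
        simpa [ConnectedComponent.eq] using h w v
      rw [this, Nat.card_coe_set_eq, Set.ncard_univ]
    have hrange : (Set.range fun C : (G.induce T).ConnectedComponent => Nat.card C.supp)
        = {Nat.card T} := by
      ext m
      constructor
      · rintro ⟨C, rfl⟩; exact hCC C
      · rintro rfl
        obtain ⟨v⟩ := hT
        exact ⟨_, hCC ((G.induce T).connectedComponentMk v)⟩
    rw [maxCompCard, hrange, csSup_singleton]

lemma preconnected_cases {A : Finset α} {B : Finset β}
    (h : (∃ a ∈ A, ∃ b ∈ B, ¬ E a b) ∨ A = ∅ ∨ B = ∅) :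
    ((cobip E).induce (sideSet A B)).Preconnected := by
  rcases h with ⟨a0, ha0, b0, hb0, hnE⟩ | hA | hB
  · intro x y
    set u : sideSet A B := ⟨Sum.inl a0, ha0⟩
    set w : sideSet A B := ⟨Sum.inr b0, hb0⟩
    have huw : ((cobip E).induce (sideSet A B)).Reachable u w := Adj.reachable hnE
    have key : ∀ z : sideSet A B, ((cobip E).induce (sideSet A B)).Reachable z u ∨
        ((cobip E).induce (sideSet A B)).Reachable z w := by
      intro z
      obtain ⟨(a|b), hz⟩ := z
      · exact Or.inl (reachable_of_side rfl)
      · exact Or.inr (reachable_of_side rfl)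
    rcases key x with hx | hx <;> rcases key y with hy | hy
    · exact hx.trans hy.symm
    · exact hx.trans (huw.trans hy.symm)
    · exact hx.trans (huw.symm.trans hy.symm)
    · exact hx.trans hy.symm
  · intro x y
    refine reachable_of_side ?_
    obtain ⟨(a|b), hx⟩ := x
    · exact absurd hx (by simp [sideSet, hA])
    · obtain ⟨(a'|b'), hy⟩ := y
      · exact absurd hy (by simp [sideSet, hA])
      · rfl
  · intro x y
    refine reachable_of_side ?_
    obtain ⟨(a|b), hx⟩ := x
    · obtain ⟨(a'|b'), hy⟩ := y
      · rfl
      · exact absurd hy (by simp [sideSet, hB])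
    · exact absurd hx (by simp [sideSet, hB])

lemma cobip_not_connected_of_full (htot : ∀ a b, E a b) (a : α) (b : β) :
    ¬ (cobip E).Connected := by
  intro h
  have hr := h.preconnected (Sum.inl a) (Sum.inr b)
  have := isLeft_eq_of_reachable (G := cobip E) Sum.isLeft ?_ hr
  · simp at this
  · rintro (x|x) (y|y) hadj
    · rfl
    · exact absurd (htot x y) hadj
    · exact absurd (htot y x) hadj
    · rfl


section fin
variable [DecidableEq α] [DecidableEq β]

def joinF (A : Finset α) (B : Finset β) : Finset (α ⊕ β) :=
  A.map ⟨Sum.inl, Sum.inl_injective⟩ ∪ B.map ⟨Sum.inr, Sum.inr_injective⟩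

lemma coe_joinF (A : Finset α) (B : Finset β) :
    ((joinF A B : Finset (α ⊕ β)) : Set (α ⊕ β)) = sideSet A B := by
  ext (a|b) <;> simp [joinF, sideSet]

lemma card_joinF (A : Finset α) (B : Finset β) :
    (joinF A B).card = A.card + B.card := by
  rw [joinF, Finset.card_union_of_disjoint, Finset.card_map, Finset.card_map]
  simp [Finset.disjoint_left]

lemma crd_sideSet (A : Finset α) (B : Finset β) :
    Nat.card (sideSet A B) = A.card + B.card := by
  rw [← coe_joinF, Nat.card_coe_set_eq, Set.ncard_coe_finset, card_joinF]

lemma compl_joinF (S : Finset (α ⊕ β)) :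
    ∃ (A : Finset α) (B : Finset β), Sᶜ = joinF A B := by
  refine ⟨Finset.univ.filter (fun a => Sum.inl a ∉ S),
    Finset.univ.filter (fun b => Sum.inr b ∉ S), ?_⟩
  ext (a|b) <;> simp [joinF]

end fin


section key
variable [DecidableEq α] [DecidableEq β]

lemma backward_main (n : ℕ) (hcard1 : Fintype.card α = n) (hcard2 : Fintype.card β = n)
    (hconn : (cobip E).Connected) (A : Finset α) (B : Finset β)
    (hA : A.Nonempty) (hB : B.Nonempty) (hAB : ∀ a ∈ A, ∀ b ∈ B, E a b) :
    ∃ S : Finset (α ⊕ β), S.Nonempty ∧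
      maxCompCard (cobip E) ((S : Set (α ⊕ β)))ᶜ < Sᶜ.card ∧
      Sᶜ.card = A.card + B.card ∧
      maxCompCard (cobip E) ((S : Set (α ⊕ β)))ᶜ = max A.card B.card ∧
      (S.card : ℝ) = 2 * n - A.card - B.card := by
  have hV : Fintype.card (α ⊕ β) = 2 * n := by
    rw [Fintype.card_sum, hcard1, hcard2]; ring
  set S : Finset (α ⊕ β) := (joinF A B)ᶜ with hSdef
  have hSc : Sᶜ = joinF A B := compl_compl _
  have hT : ((S : Set (α ⊕ β)))ᶜ = sideSet A B := by
    rw [← Finset.coe_compl, hSc, coe_joinF]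
  have hcardc : Sᶜ.card = A.card + B.card := by rw [hSc, card_joinF]
  have hmax : maxCompCard (cobip E) ((S : Set (α ⊕ β)))ᶜ = max A.card B.card := by
    rw [hT]; exact maxCompCard_sideSet hA hB hAB
  have hlt : maxCompCard (cobip E) ((S : Set (α ⊕ β)))ᶜ < Sᶜ.card := by
    rw [hmax, hcardc]
    have h1 := hA.card_pos
    have h2 := hB.card_pos
    omega
  have hne : S.Nonempty := by
    rw [← Finset.card_pos, Finset.card_compl, card_joinF, hV]
    have hle1 : A.card ≤ n := hcard1 ▸ A.card_le_univ
    have hle2 : B.card ≤ n := hcard2 ▸ B.card_le_univ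
    rcases lt_or_eq_of_le hle1 with h | h
    · omega
    rcases lt_or_eq_of_le hle2 with h2 | h2
    · omega
    exfalso
    have hAu : A = Finset.univ := by rw [← Finset.card_eq_iff_eq_univ, hcard1, ← h]
    have hBu : B = Finset.univ := by rw [← Finset.card_eq_iff_eq_univ, hcard2, ← h2]
    obtain ⟨a, _⟩ := hA
    obtain ⟨b, _⟩ := hB
    refine cobip_not_connected_of_full (fun a' b' => ?_) a b hconn
    exact hAB a' (hAu ▸ Finset.mem_univ a') b' (hBu ▸ Finset.mem_univ b')
  have hScard : (S.card : ℝ) = 2 * n - A.card - B.card := by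
    have h1 := Finset.card_add_card_compl S
    rw [hV, hcardc] at h1
    have h2 : ((S.card : ℕ) : ℝ) + ((A.card + B.card : ℕ) : ℝ) = ((2 * n : ℕ) : ℝ) := by
      exact_mod_cast congrArg (Nat.cast : ℕ → ℝ) h1
    push_cast at h2 ⊢
    linarith
  exact ⟨S, hne, hlt, hcardc, hmax, hScard⟩

lemma key_set_eq (n : ℕ) (hcard1 : Fintype.card α = n) (hcard2 : Fintype.card β = n)
    (hconn : (cobip E).Connected) :
    {x : ℝ | ∃ S : Finset (α ⊕ β), S.Nonempty ∧
      maxCompCard (cobip E) ((S : Set (α ⊕ β)))ᶜ < Sᶜ.card ∧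
      x = (S.card : ℝ) / ((Sᶜ.card : ℝ) - (maxCompCard (cobip E) ((S : Set (α ⊕ β)))ᶜ : ℕ))}
    = {x : ℝ |
        (∃ (A : Finset α) (B : Finset β), A.Nonempty ∧ B.Nonempty ∧ A.card ≤ B.card ∧
          (∀ a ∈ A, ∀ b ∈ B, E a b) ∧
          x = ((2 * n : ℝ) - A.card - B.card) / (A.card : ℝ)) ∨
        (∃ (A : Finset β) (B : Finset α), A.Nonempty ∧ B.Nonempty ∧ A.card ≤ B.card ∧
          (∀ a ∈ A, ∀ b ∈ B, E b a) ∧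
          x = ((2 * n : ℝ) - A.card - B.card) / (A.card : ℝ))} := by
  have hV : Fintype.card (α ⊕ β) = 2 * n := by
    rw [Fintype.card_sum, hcard1, hcard2]; ring
  ext x
  constructor
  · rintro ⟨S, hS, hlt, hx⟩
    obtain ⟨A, B, hSc⟩ := compl_joinF S
    have hT : ((S : Set (α ⊕ β)))ᶜ = sideSet A B := by
      rw [← Finset.coe_compl, hSc, coe_joinF]
    rw [hT] at hlt hx
    have hcardc : Sᶜ.card = A.card + B.card := by rw [hSc, card_joinF]
    rw [hcardc] at hlt hx
    have hnotpre : ¬ ((cobip E).induce (sideSet A B)).Preconnected := by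
      intro hpre
      have h2 := maxCompCard_of_preconnected (cobip E) (sideSet A B) hpre
      rw [h2, crd_sideSet] at hlt
      exact lt_irrefl _ hlt
    have hA : A.Nonempty := by
      rw [Finset.nonempty_iff_ne_empty]
      intro h
      exact hnotpre (preconnected_cases (Or.inr (Or.inl h)))
    have hB : B.Nonempty := by
      rw [Finset.nonempty_iff_ne_empty]
      intro h
      exact hnotpre (preconnected_cases (Or.inr (Or.inr h)))
    have hAB : ∀ a ∈ A, ∀ b ∈ B, E a b := by
      by_contra h
      push_neg at h
      obtain ⟨a, ha, b, hb, hnE⟩ := h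
      exact hnotpre (preconnected_cases (Or.inl ⟨a, ha, b, hb, hnE⟩))
    rw [maxCompCard_sideSet hA hB hAB] at hx
    have hScard : (S.card : ℝ) = 2 * n - A.card - B.card := by
      have h1 := Finset.card_add_card_compl S
      rw [hV, hcardc] at h1
      have h2 : ((S.card : ℕ) : ℝ) + ((A.card + B.card : ℕ) : ℝ) = ((2 * n : ℕ) : ℝ) := by
        exact_mod_cast congrArg (Nat.cast : ℕ → ℝ) h1
      push_cast at h2 ⊢
      linarith
    rcases le_total A.card B.card with hle | hle
    · left
      refine ⟨A, B, hA, hB, hle, hAB, ?_⟩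
      rw [hx, hScard, max_eq_right hle]
      push_cast
      ring_nf
    · right
      refine ⟨B, A, hB, hA, hle, fun b hb a ha => hAB a ha b hb, ?_⟩
      rw [hx, hScard, max_eq_left hle]
      push_cast
      ring_nf
  · rintro (⟨A, B, hA, hB, hle, hAB, rfl⟩ | ⟨A, B, hA, hB, hle, hAB, rfl⟩)
    · obtain ⟨S, hne, hlt, hcardc, hmax, hScard⟩ :=
        backward_main n hcard1 hcard2 hconn A B hA hB hAB
      refine ⟨S, hne, hlt, ?_⟩
      rw [hScard, hcardc, hmax, max_eq_right hle]
      push_cast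
      ring_nf
    · obtain ⟨S, hne, hlt, hcardc, hmax, hScard⟩ :=
        backward_main n hcard1 hcard2 hconn B A hB hA (fun b hb a ha => hAB a ha b hb)
      refine ⟨S, hne, hlt, ?_⟩
      rw [hScard, hcardc, hmax, max_eq_left hle]
      push_cast
      ring_nf
end key

end main


/-- Part (I) of the main lemma: for a bipartite graph `G` with parts of size `n` and at
least one edge, whose co-bipartite complement is connected, the unsmoothened vertex attack
tolerance of the co-bipartite complement equals the minimum over bipartite cliques
`(A,B) ∈ BK(G)` (with `|A| ≤ |B|`, either orientation of the parts) of
`(2n - |A| - |B|)/|A|`, which equals the corresponding minimum of `(2n - |B|)/|A|` minus 1. -/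
theorem uvat_cobip_eq_min_over_bicliques
    {α β : Type*} [Fintype α] [Fintype β] [DecidableEq α] [DecidableEq β]
    (n : ℕ) (hcard1 : Fintype.card α = n) (hcard2 : Fintype.card β = n)
    (E : α → β → Prop) (hE : ∃ a b, E a b) (hconn : (cobip E).Connected) :
    uvat (cobip E) =
      sInf {x : ℝ |
        (∃ (A : Finset α) (B : Finset β), A.Nonempty ∧ B.Nonempty ∧ A.card ≤ B.card ∧
          (∀ a ∈ A, ∀ b ∈ B, E a b) ∧
          x = ((2 * n : ℝ) - A.card - B.card) / (A.card : ℝ)) ∨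
        (∃ (A : Finset β) (B : Finset α), A.Nonempty ∧ B.Nonempty ∧ A.card ≤ B.card ∧
          (∀ a ∈ A, ∀ b ∈ B, E b a) ∧
          x = ((2 * n : ℝ) - A.card - B.card) / (A.card : ℝ))} ∧
    uvat (cobip E) =
      sInf {x : ℝ |
        (∃ (A : Finset α) (B : Finset β), A.Nonempty ∧ B.Nonempty ∧ A.card ≤ B.card ∧
          (∀ a ∈ A, ∀ b ∈ B, E a b) ∧
          x = ((2 * n : ℝ) - B.card) / (A.card : ℝ)) ∨
        (∃ (A : Finset β) (B : Finset α), A.Nonempty ∧ B.Nonempty ∧ A.card ≤ B.card ∧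
          (∀ a ∈ A, ∀ b ∈ B, E b a) ∧
          x = ((2 * n : ℝ) - B.card) / (A.card : ℝ))} - 1 := by
  set set1 : Set ℝ := {x : ℝ |
        (∃ (A : Finset α) (B : Finset β), A.Nonempty ∧ B.Nonempty ∧ A.card ≤ B.card ∧
          (∀ a ∈ A, ∀ b ∈ B, E a b) ∧
          x = ((2 * n : ℝ) - A.card - B.card) / (A.card : ℝ)) ∨
        (∃ (A : Finset β) (B : Finset α), A.Nonempty ∧ B.Nonempty ∧ A.card ≤ B.card ∧
          (∀ a ∈ A, ∀ b ∈ B, E b a) ∧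
          x = ((2 * n : ℝ) - A.card - B.card) / (A.card : ℝ))} with hset1
  set set2 : Set ℝ := {x : ℝ |
        (∃ (A : Finset α) (B : Finset β), A.Nonempty ∧ B.Nonempty ∧ A.card ≤ B.card ∧
          (∀ a ∈ A, ∀ b ∈ B, E a b) ∧
          x = ((2 * n : ℝ) - B.card) / (A.card : ℝ)) ∨
        (∃ (A : Finset β) (B : Finset α), A.Nonempty ∧ B.Nonempty ∧ A.card ≤ B.card ∧
          (∀ a ∈ A, ∀ b ∈ B, E b a) ∧
          x = ((2 * n : ℝ) - B.card) / (A.card : ℝ))} with hset2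
  have h1 : uvat (cobip E) = sInf set1 := by
    unfold uvat
    exact congrArg sInf (key_set_eq n hcard1 hcard2 hconn)
  refine ⟨h1, ?_⟩
  -- set2 = (· + 1) '' set1
  have himg : set2 = (fun y : ℝ => y + 1) '' set1 := by
    ext x
    constructor
    · rintro (⟨A, B, hA, hB, hle, hAB, rfl⟩ | ⟨A, B, hA, hB, hle, hAB, rfl⟩)
      · refine ⟨((2 * n : ℝ) - A.card - B.card) / (A.card : ℝ),
          Or.inl ⟨A, B, hA, hB, hle, hAB, rfl⟩, ?_⟩
        have hA0 : (A.card : ℝ) ≠ 0 := by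
          exact_mod_cast hA.card_pos.ne'
        field_simp
        ring
      · refine ⟨((2 * n : ℝ) - A.card - B.card) / (A.card : ℝ),
          Or.inr ⟨A, B, hA, hB, hle, hAB, rfl⟩, ?_⟩
        have hA0 : (A.card : ℝ) ≠ 0 := by
          exact_mod_cast hA.card_pos.ne'
        field_simp
        ring
    · rintro ⟨y, (⟨A, B, hA, hB, hle, hAB, rfl⟩ | ⟨A, B, hA, hB, hle, hAB, rfl⟩), rfl⟩
      · refine Or.inl ⟨A, B, hA, hB, hle, hAB, ?_⟩
        have hA0 : (A.card : ℝ) ≠ 0 := by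
          exact_mod_cast hA.card_pos.ne'
        field_simp
        ring
      · refine Or.inr ⟨A, B, hA, hB, hle, hAB, ?_⟩
        have hA0 : (A.card : ℝ) ≠ 0 := by
          exact_mod_cast hA.card_pos.ne'
        field_simp
        ring
  have hne1 : set1.Nonempty := by
    obtain ⟨a, b, hab⟩ := hE
    refine ⟨((2 * n : ℝ) - ({a} : Finset α).card - ({b} : Finset β).card) / (({a} : Finset α).card : ℝ),
      Or.inl ⟨{a}, {b}, Finset.singleton_nonempty a, Finset.singleton_nonempty b, le_refl _, ?_, rfl⟩⟩
    intro a' ha' b' hb'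
    rw [Finset.mem_singleton] at ha' hb'
    rw [ha', hb']
    exact hab
  have hbdd1 : BddBelow set1 := by
    refine ⟨0, ?_⟩
    rintro x (⟨A, B, hA, hB, hle, hAB, rfl⟩ | ⟨A, B, hA, hB, hle, hAB, rfl⟩)
    · have h1 : A.card ≤ n := hcard1 ▸ A.card_le_univ
      have h2 : B.card ≤ n := hcard2 ▸ B.card_le_univ
      apply div_nonneg _ (Nat.cast_nonneg _)
      have : (A.card : ℝ) ≤ n := by exact_mod_cast h1
      have : (B.card : ℝ) ≤ n := by exact_mod_cast h2
      linarith
    · have h1 : A.card ≤ n := hcard2 ▸ A.card_le_univ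
      have h2 : B.card ≤ n := hcard1 ▸ B.card_le_univ
      apply div_nonneg _ (Nat.cast_nonneg _)
      have : (A.card : ℝ) ≤ n := by exact_mod_cast h1
      have : (B.card : ℝ) ≤ n := by exact_mod_cast h2
      linarith
  have hmap := (OrderIso.addRight (1 : ℝ)).map_csInf' hne1 hbdd1
  simp only [OrderIso.addRight_apply] at hmap
  rw [h1, himg]
  rw [← hmap]
  ring
end

section
/- Let G = (V1, V2, E) be a bipartite graph with |V1| = |V2| = n and E ≠ ∅, let Ḡ be its co-bipartite complement, and assume Ḡ is connected. Let k be the size of a maximum balanced bipartite clique of G. Then τ̂(Ḡ) ≥ n/k − 1. -/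
open SimpleGraph

/-- `G` (with edge relation `E`) contains a balanced bipartite clique of size `k`:
sets `A ⊆ V₁`, `B ⊆ V₂` with `|A| = |B| = k` and all pairs adjacent. -/
def isBalancedClique {α β : Type*} (E : α → β → Prop) (k : ℕ) : Prop :=
  ∃ (A : Finset α) (B : Finset β), A.card = k ∧ B.card = k ∧ ∀ a ∈ A, ∀ b ∈ B, E a b

lemma le_maxCompCard {V : Type*} [Fintype V] (G : SimpleGraph V) (T : Set V)
    (c : (G.induce T).ConnectedComponent) : Nat.card c.supp ≤ maxCompCard G T := by
  apply le_csSup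
  · refine ⟨Nat.card T, ?_⟩
    rintro x ⟨c', rfl⟩
    exact Nat.card_le_card_of_injective (Subtype.val : c'.supp → T) Subtype.val_injective
  · exact ⟨c, rfl⟩

lemma maxCompCard_le {V : Type*} [Fintype V] (G : SimpleGraph V) (T : Set V) {m : ℕ}
    (h : ∀ c : (G.induce T).ConnectedComponent, Nat.card c.supp ≤ m) :
    maxCompCard G T ≤ m := by
  apply csSup_le'
  rintro x ⟨c, rfl⟩
  exact h c

lemma reachable_eq_of_no_adj {V : Type*} {G : SimpleGraph V} (h : ∀ x y, ¬ G.Adj x y)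
    {x y : V} (hr : G.Reachable x y) : x = y := by
  have hG : G = ⊥ := by ext a b; simp [h a b]
  rw [hG] at hr
  exact SimpleGraph.reachable_bot.mp hr

lemma cobip_reach_inl {α β : Type*} (E : α → β → Prop) (T : Set (α ⊕ β))
    {a a' : α} (h : Sum.inl a ∈ T) (h' : Sum.inl a' ∈ T) :
    ((cobip E).induce T).Reachable ⟨Sum.inl a, h⟩ ⟨Sum.inl a', h'⟩ := by
  by_cases hw : a = a'
  · subst hw; exact Reachable.refl _
  · exact (show ((cobip E).induce T).Adj ⟨Sum.inl a, h⟩ ⟨Sum.inl a', h'⟩ from hw).reachable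

lemma cobip_reach_inr {α β : Type*} (E : α → β → Prop) (T : Set (α ⊕ β))
    {b b' : β} (h : Sum.inr b ∈ T) (h' : Sum.inr b' ∈ T) :
    ((cobip E).induce T).Reachable ⟨Sum.inr b, h⟩ ⟨Sum.inr b', h'⟩ := by
  by_cases hw : b = b'
  · subst hw; exact Reachable.refl _
  · exact (show ((cobip E).induce T).Adj ⟨Sum.inr b, h⟩ ⟨Sum.inr b', h'⟩ from hw).reachable

lemma cobip_adj_cross {α β : Type*} (E : α → β → Prop) (T : Set (α ⊕ β))
    {a : α} {b : β} (h : Sum.inl a ∈ T) (h' : Sum.inr b ∈ T) (hE : ¬ E a b) :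
    ((cobip E).induce T).Adj ⟨Sum.inl a, h⟩ ⟨Sum.inr b, h'⟩ := hE

/-- Lower bound of part (II) of the main lemma: if `k` is the size of a maximum balanced
bipartite clique of a bipartite graph `G` with parts of size `n` and at least one edge,
and the co-bipartite complement of `G` is connected, then `τ̂(Ḡ) ≥ n/k - 1`. -/
theorem uvat_cobip_ge
    {α β : Type*} [Fintype α] [Fintype β] [DecidableEq α] [DecidableEq β]
    (n : ℕ) (hcard1 : Fintype.card α = n) (hcard2 : Fintype.card β = n)
    (E : α → β → Prop) (hE : ∃ a b, E a b) (hconn : (cobip E).Connected)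
    (k : ℕ) (hk : isBalancedClique E k) (hkmax : ∀ m, isBalancedClique E m → m ≤ k) :
    (n : ℝ) / (k : ℝ) - 1 ≤ uvat (cobip E) := by
  classical
  obtain ⟨a0, b0, hab0⟩ := hE
  have hk1 : 1 ≤ k := by
    refine hkmax 1 ⟨{a0}, {b0}, Finset.card_singleton _, Finset.card_singleton _, ?_⟩
    intro a ha b hb
    simp only [Finset.mem_singleton] at ha hb
    subst ha; subst hb; exact hab0
  have hkn : k ≤ n := by
    obtain ⟨A, B, hA, hB, -⟩ := hk
    calc k = A.card := hA.symm
      _ ≤ Fintype.card α := Finset.card_le_univ _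
      _ = n := hcard1
  have htotal : Fintype.card (α ⊕ β) = 2 * n := by
    rw [Fintype.card_sum, hcard1, hcard2]; ring
  have hn2 : 2 ≤ n := by
    rcases Nat.lt_or_ge n 2 with h | h
    · exfalso
      have hn1 : n = 1 := by omega
      have hsα : Subsingleton α := by
        rw [← Fintype.card_le_one_iff_subsingleton, hcard1, hn1]
      have hsβ : Subsingleton β := by
        rw [← Fintype.card_le_one_iff_subsingleton, hcard2, hn1]
      have hbot : (cobip E) = ⊥ := by
        ext x y
        simp only [SimpleGraph.bot_adj, iff_false]
        rcases x with a | b <;> rcases y with a' | b'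
        · intro hxy; exact hxy (Subsingleton.elim a a')
        · intro hxy
          exact hxy (by rw [Subsingleton.elim a a0, Subsingleton.elim b' b0]; exact hab0)
        · intro hxy
          exact hxy (by rw [Subsingleton.elim a' a0, Subsingleton.elim b b0]; exact hab0)
        · intro hxy; exact hxy (Subsingleton.elim b b')
      have hr := hconn.preconnected (Sum.inl a0) (Sum.inr b0)
      rw [hbot] at hr
      exact (by simp : (Sum.inl a0 : α ⊕ β) ≠ Sum.inr b0) (SimpleGraph.reachable_bot.mp hr)
    · exact h
  apply le_csInf
  · -- nonempty
    set P : Finset (α ⊕ β) := {Sum.inl a0, Sum.inr b0} with hP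
    have hPcard : P.card = 2 := Finset.card_pair (by simp)
    have hcompl : (Pᶜ)ᶜ = P := compl_compl P
    have hTset : ((↑(Pᶜ) : Set (α ⊕ β)))ᶜ = (P : Set (α ⊕ β)) := by
      rw [← Finset.coe_compl, hcompl]
    have hnoadj : ∀ u v : (P : Set (α ⊕ β)), ¬ ((cobip E).induce (P : Set (α ⊕ β))).Adj u v := by
      intro u v huv
      have hu := u.2
      have hv := v.2
      simp only [hP, Finset.coe_insert, Finset.coe_singleton, Set.mem_insert_iff,
        Set.mem_singleton_iff] at hu hv
      have hadj : (cobip E).Adj u.1 v.1 := huv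
      rcases hu with hu | hu <;> rcases hv with hv | hv <;> rw [hu, hv] at hadj
      · exact hadj rfl
      · exact hadj hab0
      · exact hadj hab0
      · exact hadj rfl
    have hmax : maxCompCard (cobip E) ((↑(Pᶜ) : Set (α ⊕ β)))ᶜ ≤ 1 := by
      rw [hTset]
      apply maxCompCard_le
      intro c
      rw [Finite.card_le_one_iff_subsingleton]
      constructor
      rintro ⟨x, hx⟩ ⟨y, hy⟩
      apply Subtype.ext
      rw [SimpleGraph.ConnectedComponent.mem_supp_iff] at hx hy
      exact reachable_eq_of_no_adj hnoadj
        (SimpleGraph.ConnectedComponent.eq.mp (hx.trans hy.symm))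
    have hvalid : maxCompCard (cobip E) ((↑(Pᶜ) : Set (α ⊕ β)))ᶜ < (Pᶜ)ᶜ.card := by
      rw [hcompl, hPcard]; omega
    refine ⟨_, ⟨Pᶜ, ?_, hvalid, rfl⟩⟩
    rw [← Finset.card_pos, Finset.card_compl, hPcard, htotal]
    omega
  · rintro x ⟨S, hSne, hvalid, rfl⟩
    have hT : ((S : Set (α ⊕ β)))ᶜ = (↑(Sᶜ) : Set (α ⊕ β)) := (Finset.coe_compl S).symm
    rw [hT] at hvalid ⊢
    set T : Set (α ⊕ β) := ↑(Sᶜ) with hTdef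
    set FA := (Sᶜ).toLeft with hFA
    set FB := (Sᶜ).toRight with hFB
    have hmemA : ∀ a ∈ FA, Sum.inl a ∈ T := fun a ha =>
      Finset.mem_coe.mpr (Finset.mem_toLeft.mp ha)
    have hmemB : ∀ b ∈ FB, Sum.inr b ∈ T := fun b hb =>
      Finset.mem_coe.mpr (Finset.mem_toRight.mp hb)
    have hTcard : Nat.card T = (Sᶜ).card := by
      rw [Nat.card_coe_set_eq, hTdef, Set.ncard_coe_finset]
    have hpairs : ∀ a ∈ FA, ∀ b ∈ FB, E a b := by
      intro a ha b hb
      by_contra hne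
      have hia : Sum.inl a ∈ T := hmemA a ha
      have hib : Sum.inr b ∈ T := hmemB b hb
      set c := ((cobip E).induce T).connectedComponentMk ⟨Sum.inl a, hia⟩ with hc
      have hreach : ∀ z : T, ((cobip E).induce T).Reachable z ⟨Sum.inl a, hia⟩ := by
        rintro ⟨(a' | b'), hz⟩
        · exact cobip_reach_inl E T hz hia
        · exact (cobip_reach_inr E T hz hib).trans
            ((cobip_adj_cross E T hia hib hne).symm.reachable)
      have hinj : Function.Injective (fun z : T => (⟨z, by
          rw [SimpleGraph.ConnectedComponent.mem_supp_iff]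
          exact SimpleGraph.ConnectedComponent.sound (hreach z)⟩ : c.supp)) := by
        intro z1 z2 h12
        exact congrArg Subtype.val h12
      have h1 := Nat.card_le_card_of_injective _ hinj
      rw [hTcard] at h1
      have h2 := h1.trans (le_maxCompCard (cobip E) T c)
      omega
    have hAle : FA.card ≤ maxCompCard (cobip E) T := by
      rcases FA.eq_empty_or_nonempty with h | ⟨a1, ha1⟩
      · simp [h]
      · have hia1 : Sum.inl a1 ∈ T := hmemA a1 ha1
        set c := ((cobip E).induce T).connectedComponentMk ⟨Sum.inl a1, hia1⟩ with hc
        have hinj : Function.Injective (fun a : FA => (⟨⟨Sum.inl a.1, hmemA a.1 a.2⟩, by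
            rw [SimpleGraph.ConnectedComponent.mem_supp_iff]
            exact SimpleGraph.ConnectedComponent.sound
              (cobip_reach_inl E T (hmemA a.1 a.2) hia1)⟩ : c.supp)) := by
          intro z1 z2 h12
          have h13 := congrArg (fun w => ((w : c.supp) : T).1) h12
          simp only [Sum.inl.injEq] at h13
          exact Subtype.ext h13
        have h1 := Nat.card_le_card_of_injective _ hinj
        rw [Nat.card_eq_finsetCard] at h1
        exact h1.trans (le_maxCompCard (cobip E) T c)
    have hBle : FB.card ≤ maxCompCard (cobip E) T := by
      rcases FB.eq_empty_or_nonempty with h | ⟨b1, hb1⟩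
      · simp [h]
      · have hib1 : Sum.inr b1 ∈ T := hmemB b1 hb1
        set c := ((cobip E).induce T).connectedComponentMk ⟨Sum.inr b1, hib1⟩ with hc
        have hinj : Function.Injective (fun b : FB => (⟨⟨Sum.inr b.1, hmemB b.1 b.2⟩, by
            rw [SimpleGraph.ConnectedComponent.mem_supp_iff]
            exact SimpleGraph.ConnectedComponent.sound
              (cobip_reach_inr E T (hmemB b.1 b.2) hib1)⟩ : c.supp)) := by
          intro z1 z2 h12
          have h13 := congrArg (fun w => ((w : c.supp) : T).1) h12
          simp only [Sum.inr.injEq] at h13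
          exact Subtype.ext h13
        have h1 := Nat.card_le_card_of_injective _ hinj
        rw [Nat.card_eq_finsetCard] at h1
        exact h1.trans (le_maxCompCard (cobip E) T c)
    have hminK : FA.card ≤ k ∨ FB.card ≤ k := by
      rcases le_total FA.card FB.card with h | h
      · left
        obtain ⟨B', hB'sub, hB'card⟩ := Finset.exists_subset_card_eq h
        exact hkmax _ ⟨FA, B', rfl, hB'card, fun a ha b hb => hpairs a ha b (hB'sub hb)⟩
      · right
        obtain ⟨A', hsub, hc⟩ := Finset.exists_subset_card_eq h
        exact hkmax _ ⟨A', FB, hc, rfl, fun a ha b hb => hpairs a (hsub ha) b hb⟩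
    have habcard : FA.card + FB.card = (Sᶜ).card := Finset.card_toLeft_add_card_toRight
    have hAn : FA.card ≤ n := by rw [← hcard1]; exact Finset.card_le_univ _
    have hBn : FB.card ≤ n := by rw [← hcard2]; exact Finset.card_le_univ _
    have hsum : S.card + (Sᶜ).card = 2 * n := by
      rw [Finset.card_add_card_compl, htotal]
    set M := maxCompCard (cobip E) T with hM
    have hdk : (Sᶜ).card - M ≤ k := by omega
    have hnsk : n ≤ S.card + k := by omega
    have hk0 : (0 : ℝ) < k := by exact_mod_cast hk1
    have hd0 : (0 : ℝ) < ((Sᶜ).card : ℝ) - M := by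
      have : (M : ℝ) < ((Sᶜ).card : ℝ) := by exact_mod_cast hvalid
      linarith
    rw [div_sub_one (ne_of_gt hk0), div_le_div_iff₀ hk0 hd0]
    have h1 : ((Sᶜ).card : ℝ) - M ≤ k := by
      have h2 : (((Sᶜ).card - M : ℕ) : ℝ) ≤ (k : ℝ) := by exact_mod_cast hdk
      rw [Nat.cast_sub (le_of_lt hvalid)] at h2
      exact h2
    have hknR : (k : ℝ) ≤ n := by exact_mod_cast hkn
    have hnskR : (n : ℝ) ≤ S.card + k := by exact_mod_cast hnsk
    nlinarith [mul_le_mul_of_nonneg_left h1 (by linarith : (0:ℝ) ≤ (n:ℝ) - k),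
      mul_le_mul_of_nonneg_right hnskR (le_of_lt hk0)]
end

section
/- Let G = (V1, V2, E) be a bipartite graph with |V1| = |V2| = n and E ≠ ∅, let Ḡ be its co-bipartite complement, and assume Ḡ is connected. Let k be the size of a maximum balanced bipartite clique of G, and assume k ≥ 1. Then τ̂(Ḡ) ≤ 2(n/k − 1). -/
open SimpleGraph

/-- A `Bool`-valued invariant preserved by adjacency is preserved by reachability. -/
lemma reach_pres_bool {V : Type*} {G : SimpleGraph V} (P : V → Bool)
    (hP : ∀ x y, G.Adj x y → P x = P y) :
    ∀ {u v : V}, G.Reachable u v → P u = P v := by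
  intro u v h
  obtain ⟨w⟩ := h
  induction w with
  | nil => rfl
  | cons h' _ ih => exact (hP _ _ h').trans ih

/-- Upper bound of part (II) of the main lemma: if `k ≥ 1` is the size of a maximum
balanced bipartite clique of a bipartite graph `G` with parts of size `n` and at least
one edge, and the co-bipartite complement of `G` is connected, then `τ̂(Ḡ) ≤ 2(n/k - 1)`. -/
theorem uvat_cobip_le
    {α β : Type*} [Fintype α] [Fintype β] [DecidableEq α] [DecidableEq β]
    (n : ℕ) (hcard1 : Fintype.card α = n) (hcard2 : Fintype.card β = n)
    (E : α → β → Prop) (hE : ∃ a b, E a b) (hconn : (cobip E).Connected)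
    (k : ℕ) (hk : isBalancedClique E k) (hkmax : ∀ m, isBalancedClique E m → m ≤ k)
    (hk1 : 1 ≤ k) :
    uvat (cobip E) ≤ 2 * ((n : ℝ) / (k : ℝ) - 1) := by
  classical
  obtain ⟨A, B, hA, hB, hAB⟩ := hk
  set V := α ⊕ β
  have hkn : k ≤ n := by
    have := Finset.card_le_univ A
    rw [hA] at this
    omega
  -- k < n, else the co-bipartite complement is disconnected
  have hkln : k < n := by
    rcases lt_or_eq_of_le hkn with h | h
    · exact h
    · exfalso
      have hAu : A = Finset.univ := Finset.eq_univ_of_card A (by rw [hA, h, hcard1])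
      have hBu : B = Finset.univ := Finset.eq_univ_of_card B (by rw [hB, h, hcard2])
      have hall : ∀ a b, E a b := fun a b =>
        hAB a (by simp [hAu]) b (by simp [hBu])
      have hα : Nonempty α := by
        rw [← Fintype.card_pos_iff, hcard1]; omega
      have hβ : Nonempty β := by
        rw [← Fintype.card_pos_iff, hcard2]; omega
      obtain ⟨a⟩ := hα; obtain ⟨b⟩ := hβ
      have hr := hconn.preconnected (Sum.inl a) (Sum.inr b)
      have hinv : ∀ x y : V, (cobip E).Adj x y → Sum.isLeft x = Sum.isLeft y := by
        rintro (a' | b') (a'' | b'') hxy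
        · rfl
        · exact absurd (hall a' b'') hxy
        · exact absurd (hall a'' b') hxy
        · rfl
      have := reach_pres_bool Sum.isLeft hinv hr
      simp at this
  -- the attack set: complement of the biclique
  set T : Finset V := A.map ⟨Sum.inl, Sum.inl_injective⟩ ∪ B.map ⟨Sum.inr, Sum.inr_injective⟩
    with hT
  have hmemL : ∀ a : α, Sum.inl a ∈ T ↔ a ∈ A := by intro a; simp [hT]
  have hmemR : ∀ b : β, Sum.inr b ∈ T ↔ b ∈ B := by intro b; simp [hT]
  have hdisj : Disjoint (A.map ⟨Sum.inl, Sum.inl_injective⟩)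
      (B.map ⟨Sum.inr, Sum.inr_injective⟩) := by
    rw [Finset.disjoint_left]
    rintro x hx hy
    simp only [Finset.mem_map, Function.Embedding.coeFn_mk] at hx hy
    obtain ⟨a, _, rfl⟩ := hx
    obtain ⟨b, _, hb⟩ := hy
    exact Sum.inr_ne_inl hb
  have hTcard : T.card = 2 * k := by
    rw [hT, Finset.card_union_of_disjoint hdisj, Finset.card_map, Finset.card_map, hA, hB]
    omega
  set S : Finset V := Tᶜ with hS
  have hScompl : Sᶜ = T := by simp [hS]
  have hsetcompl : ((S : Set V))ᶜ = (T : Set V) := by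
    rw [hS, Finset.coe_compl, compl_compl]
  have hVcard : Fintype.card V = 2 * n := by
    rw [Fintype.card_sum, hcard1, hcard2]; omega
  have hScard : S.card = 2 * n - 2 * k := by
    rw [hS, Finset.card_compl, hTcard, hVcard]
  -- adjacency in the induced graph preserves the side
  have hadj_inv : ∀ x y : (T : Set V), ((cobip E).induce (T : Set V)).Adj x y →
      Sum.isLeft (x : V) = Sum.isLeft (y : V) := by
    rintro ⟨(a | b), hx⟩ ⟨(a' | b'), hy⟩ hxy
    · rfl
    · exact absurd (hAB a ((hmemL a).1 (Finset.mem_coe.1 hx)) b'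
        ((hmemR b').1 (Finset.mem_coe.1 hy))) hxy
    · exact absurd (hAB a' ((hmemL a').1 (Finset.mem_coe.1 hy)) b
        ((hmemR b).1 (Finset.mem_coe.1 hx))) hxy
    · rfl
  -- same side implies reachable (each side is a clique)
  have hreach : ∀ x y : (T : Set V), Sum.isLeft (x : V) = Sum.isLeft (y : V) →
      ((cobip E).induce (T : Set V)).Reachable x y := by
    rintro ⟨x, hx⟩ ⟨y, hy⟩ hxy
    by_cases hxyeq : (⟨x, hx⟩ : (T : Set V)) = ⟨y, hy⟩
    · rw [hxyeq]
    · apply SimpleGraph.Adj.reachable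
      have hne : x ≠ y := fun h => hxyeq (Subtype.ext h)
      rcases x with a | b <;> rcases y with a' | b'
      · show a ≠ a'
        intro h; exact hne (congrArg Sum.inl h)
      · simp at hxy
      · simp at hxy
      · show b ≠ b'
        intro h; exact hne (congrArg Sum.inr h)
  -- each side has k vertices
  have hside : ∀ c : Bool, Nat.card {x : (T : Set V) | Sum.isLeft (x : V) = c} = k := by
    intro c
    cases c
    · have hbij : Function.Bijective (fun b : {b : β // b ∈ B} =>
          (⟨⟨Sum.inr b.1, Finset.mem_coe.2 ((hmemR b.1).2 b.2)⟩, rfl⟩ :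
            {x : (T : Set V) | Sum.isLeft (x : V) = false})) := by
        constructor
        · rintro ⟨b, hb⟩ ⟨b', hb'⟩ h
          simp only [Subtype.mk.injEq] at h
          exact Subtype.ext (Sum.inr.inj (congrArg (fun z => z.1.1) h))
        · rintro ⟨⟨(a | b), hxT⟩, hxL⟩
          · simp only [Set.mem_setOf_eq] at hxL
            exact absurd hxL (by simp)
          · exact ⟨⟨b, (hmemR b).1 (Finset.mem_coe.1 hxT)⟩, rfl⟩
      rw [← Nat.card_eq_of_bijective _ hbij]
      have : Nat.card {b : β // b ∈ B} = B.card := Nat.card_eq_finsetCard B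
      rw [this, hB]
    · have hbij : Function.Bijective (fun a : {a : α // a ∈ A} =>
          (⟨⟨Sum.inl a.1, Finset.mem_coe.2 ((hmemL a.1).2 a.2)⟩, rfl⟩ :
            {x : (T : Set V) | Sum.isLeft (x : V) = true})) := by
        constructor
        · rintro ⟨a, ha⟩ ⟨a', ha'⟩ h
          simp only [Subtype.mk.injEq] at h
          exact Subtype.ext (Sum.inl.inj (congrArg (fun z => z.1.1) h))
        · rintro ⟨⟨(a | b), hxT⟩, hxL⟩
          · exact ⟨⟨a, (hmemL a).1 (Finset.mem_coe.1 hxT)⟩, rfl⟩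
          · simp only [Set.mem_setOf_eq] at hxL
            exact absurd hxL (by simp)
      rw [← Nat.card_eq_of_bijective _ hbij]
      have : Nat.card {a : α // a ∈ A} = A.card := Nat.card_eq_finsetCard A
      rw [this, hA]
  -- every component has exactly k vertices
  have hsupp : ∀ C : ((cobip E).induce (T : Set V)).ConnectedComponent,
      Nat.card C.supp = k := by
    intro C
    obtain ⟨v, rfl⟩ := C.exists_rep
    have hsuppeq : (SimpleGraph.connectedComponentMk ((cobip E).induce (T : Set V)) v).supp =
        {x : (T : Set V) | Sum.isLeft (x : V) = Sum.isLeft (v : V)} := by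
      ext x
      simp only [SimpleGraph.ConnectedComponent.mem_supp_iff, Set.mem_setOf_eq,
        SimpleGraph.ConnectedComponent.eq]
      constructor
      · intro h
        exact reach_pres_bool (fun z : (T : Set V) => Sum.isLeft (z : V))
          (fun x y hxy => hadj_inv x y hxy) h
      · intro h
        exact hreach x v h
    show Nat.card (SimpleGraph.connectedComponentMk ((cobip E).induce (T : Set V)) v).supp = k
    rw [hsuppeq]
    exact hside _
  have hAne : A.Nonempty := Finset.card_pos.1 (by omega)
  obtain ⟨a0, ha0⟩ := hAne
  have hTvertex : Nonempty (T : Set V) :=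
    ⟨⟨Sum.inl a0, Finset.mem_coe.2 ((hmemL a0).2 ha0)⟩⟩
  have hCne : Nonempty ((cobip E).induce (T : Set V)).ConnectedComponent :=
    hTvertex.map (SimpleGraph.connectedComponentMk _)
  have hmax : maxCompCard (cobip E) ((S : Set V))ᶜ = k := by
    rw [hsetcompl]
    unfold maxCompCard
    have hrange : (Set.range fun C : ((cobip E).induce (T : Set V)).ConnectedComponent =>
        Nat.card C.supp) = {k} := by
      ext m
      simp only [Set.mem_range, Set.mem_singleton_iff]
      constructor
      · rintro ⟨C, rfl⟩; exact hsupp C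
      · rintro rfl; exact ⟨Classical.choice hCne, hsupp _⟩
    rw [hrange, csSup_singleton]
  have hSnonempty : S.Nonempty := by
    rw [← Finset.card_pos, hScard]; omega
  have hlt : maxCompCard (cobip E) ((S : Set V))ᶜ < Sᶜ.card := by
    rw [hmax, hScompl, hTcard]; omega
  have hbdd : BddBelow {x : ℝ | ∃ S : Finset V, S.Nonempty ∧
      maxCompCard (cobip E) ((S : Set V))ᶜ < Sᶜ.card ∧
      x = (S.card : ℝ) / ((Sᶜ.card : ℝ) - (maxCompCard (cobip E) ((S : Set V))ᶜ : ℝ))} := by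
    refine ⟨0, ?_⟩
    rintro x ⟨S', hne, hlt', rfl⟩
    have hd : (maxCompCard (cobip E) ((S' : Set V))ᶜ : ℝ) < (S'ᶜ.card : ℝ) := by
      exact_mod_cast hlt'
    apply div_nonneg (by positivity)
    linarith
  have hmem : (S.card : ℝ) / ((Sᶜ.card : ℝ) - (maxCompCard (cobip E) ((S : Set V))ᶜ : ℝ)) ∈
      {x : ℝ | ∃ S : Finset V, S.Nonempty ∧
        maxCompCard (cobip E) ((S : Set V))ᶜ < Sᶜ.card ∧
        x = (S.card : ℝ) / ((Sᶜ.card : ℝ) - (maxCompCard (cobip E) ((S : Set V))ᶜ : ℝ))} :=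
    ⟨S, hSnonempty, hlt, rfl⟩
  have hle := csInf_le hbdd hmem
  have heq : (S.card : ℝ) / ((Sᶜ.card : ℝ) - (maxCompCard (cobip E) ((S : Set V))ᶜ : ℝ)) =
      2 * ((n : ℝ) / (k : ℝ) - 1) := by
    have h1 : (S.card : ℝ) = 2 * n - 2 * k := by
      rw [hScard, Nat.cast_sub (by omega)]
      push_cast; ring
    have h2 : (Sᶜ.card : ℝ) = 2 * k := by
      rw [hScompl, hTcard]; push_cast; ring
    rw [hmax, h1, h2]
    have hk0 : (k : ℝ) ≠ 0 := by
      exact_mod_cast Nat.one_le_iff_ne_zero.1 hk1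
    have hkk : (2:ℝ) * (k:ℝ) - (k:ℝ) = (k:ℝ) := by ring
    rw [hkk, div_eq_iff hk0]
    field_simp
  rw [heq] at hle
  exact hle
end
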